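/- The function f(x) = -3x² log(3x²) on (0, 1/√3) has a unique critical-point structure such that for any t, there are at most two points x₁ ≤ x₂ in (0,1) with f'(x₁) = f'(x₂) = t; consequently, the maximum of f(k₀₀)+f(k₀₁)+f(k₁₀)+f(k₁₁) subject to k₀₀+k₀₁+k₁₀+k₁₁ = 1, kᵢⱼ ≥ 0, is attained at k₀₀=k₀₁=k₁₀=k₁₁ = 1/4. -/

import Mathlib

/-- `f(x) = -3x² log(3x²)` (natural logarithm). -/
noncomputable def fCap (x : ℝ) : ℝ := -(3 * x ^ 2) * Real.log (3 * x ^ 2)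

noncomputable def gCap (x : ℝ) : ℝ := -6 * x * Real.log (3 * x ^ 2) - 6 * x

lemma hasDerivAt_sq3 (x : ℝ) : HasDerivAt (fun x : ℝ => 3 * x ^ 2) (6 * x) x := by
  have := (hasDerivAt_pow 2 x).const_mul 3
  refine this.congr_deriv ?_
  ring

lemma hasDerivAt_fCap (x : ℝ) (hx : x ≠ 0) :
    HasDerivAt fCap (gCap x) x := by
  have h3 : 3 * x ^ 2 ≠ 0 := by positivity
  have hlog : HasDerivAt (fun x : ℝ => Real.log (3 * x ^ 2)) (6 * x / (3 * x ^ 2)) x :=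
    (hasDerivAt_sq3 x).log h3
  have h := ((hasDerivAt_sq3 x).neg).mul hlog
  refine h.congr_deriv ?_
  unfold gCap
  simp only [Pi.neg_apply]
  field_simp
  ring

lemma hasDerivAt_gCap (x : ℝ) (hx : x ≠ 0) :
    HasDerivAt gCap (-6 * Real.log (3 * x ^ 2) - 18) x := by
  have h3 : 3 * x ^ 2 ≠ 0 := by positivity
  have hlog : HasDerivAt (fun x : ℝ => Real.log (3 * x ^ 2)) (6 * x / (3 * x ^ 2)) x :=
    (hasDerivAt_sq3 x).log h3
  have hid : HasDerivAt (fun x : ℝ => -6 * x) (-6) x := by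
    simpa using (hasDerivAt_id x).const_mul (-6)
  have hid6 : HasDerivAt (fun x : ℝ => 6 * x) (6) x := by
    simpa using (hasDerivAt_id x).const_mul (6)
  have h := (hid.mul hlog).sub hid6
  refine h.congr_deriv ?_
  field_simp
  ring

noncomputable def x0 : ℝ := Real.exp (-(3/2)) / Real.sqrt 3

lemma x0_pos : 0 < x0 := by
  unfold x0; positivity

lemma x0_sq : 3 * x0 ^ 2 = Real.exp (-3) := by
  unfold x0
  rw [div_pow, Real.sq_sqrt (by norm_num : (3:ℝ) ≥ 0)]
  rw [← Real.exp_nat_mul]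
  · field_simp
    norm_num

lemma x0_lt_one : x0 < 1 := by
  unfold x0
  rw [div_lt_one (by positivity)]
  calc Real.exp (-(3/2)) < 1 := Real.exp_lt_one_iff.mpr (by norm_num)
    _ ≤ Real.sqrt 3 := by
        rw [show (1:ℝ) = Real.sqrt 1 by simp]
        exact Real.sqrt_le_sqrt (by norm_num)

lemma gCap_mono : StrictMonoOn gCap (Set.Ioc 0 x0) := by
  apply strictMonoOn_of_deriv_pos (convex_Ioc 0 x0)
  · exact fun x hx => (hasDerivAt_gCap x (ne_of_gt hx.1)).continuousAt.continuousWithinAt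
  · intro x hx
    rw [interior_Ioc] at hx
    rw [(hasDerivAt_gCap x (ne_of_gt hx.1)).deriv]
    have h1 : 3 * x ^ 2 < Real.exp (-3) := by
      rw [← x0_sq]
      have := pow_lt_pow_left₀ hx.2 hx.1.le (n := 2) (by norm_num)
      linarith
    have h2 : Real.log (3 * x ^ 2) < -3 := by
      have := Real.log_lt_log (by nlinarith [hx.1] : (0:ℝ) < 3 * x ^ 2) h1
      rwa [Real.log_exp] at this
    linarith

lemma gCap_anti : StrictAntiOn gCap (Set.Ico x0 1) := by
  apply strictAntiOn_of_deriv_neg (convex_Ico x0 1)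
  · exact fun x hx =>
      (hasDerivAt_gCap x (ne_of_gt (lt_of_lt_of_le x0_pos hx.1))).continuousAt.continuousWithinAt
  · intro x hx
    rw [interior_Ico] at hx
    have hxpos : 0 < x := lt_trans x0_pos hx.1
    rw [(hasDerivAt_gCap x (ne_of_gt hxpos)).deriv]
    have h1 : Real.exp (-3) < 3 * x ^ 2 := by
      rw [← x0_sq]
      have := pow_lt_pow_left₀ hx.1 x0_pos.le (n := 2) (by norm_num)
      linarith
    have h2 : -3 < Real.log (3 * x ^ 2) := by
      have := Real.log_lt_log (Real.exp_pos _) h1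
      rwa [Real.log_exp] at this
    linarith

lemma fCap_quarter : fCap (1/4) = (3/16) * Real.log (16/3) := by
  unfold fCap
  rw [show (3:ℝ) * (1/4)^2 = 3/16 by norm_num,
    Real.log_div (by norm_num) (by norm_num), Real.log_div (by norm_num) (by norm_num)]
  ring

lemma key_bound (x : ℝ) (hx : 0 ≤ x) :
    fCap x ≤ 3 * (Real.log (16/3) - 2) * x ^ 2 + (3/2) * x := by
  rcases eq_or_lt_of_le hx with h | h
  · simp [fCap, ← h]
  · have h4x : (0:ℝ) < 1 / (4 * x) := by positivity
    have hlog := Real.log_le_sub_one_of_pos h4x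
    have e1 : Real.log (1 / (4 * x)) = -(Real.log 4 + Real.log x) := by
      rw [one_div, Real.log_inv, Real.log_mul (by norm_num) (ne_of_gt h)]
    have e2 : Real.log (3 * x ^ 2) = Real.log 3 + 2 * Real.log x := by
      rw [Real.log_mul (by norm_num) (by positivity), Real.log_pow]
      push_cast; ring
    have e3 : Real.log (16/3) = 2 * Real.log 4 - Real.log 3 := by
      rw [Real.log_div (by norm_num) (by norm_num),
        show (16:ℝ) = 4 ^ 2 by norm_num, Real.log_pow]
      push_cast; ring
    rw [e1] at hlog
    have h6 : 6 * x ^ 2 * (-(Real.log 4 + Real.log x)) ≤ 6 * x ^ 2 * (1 / (4 * x) - 1) :=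
      mul_le_mul_of_nonneg_left hlog (by positivity)
    have heq : 6 * x ^ 2 * (1 / (4 * x) - 1) = 3/2 * x - 6 * x ^ 2 := by
      field_simp; ring
    rw [heq] at h6
    unfold fCap
    rw [e2, e3]
    nlinarith [h6]

lemma log163_lt_two : Real.log (16/3) < 2 := by
  rw [Real.log_lt_iff_lt_exp (by norm_num)]
  have h := Real.exp_one_gt_d9
  have : Real.exp 2 = Real.exp 1 * Real.exp 1 := by
    rw [← Real.exp_add]; norm_num
  nlinarith

/-- (i) Each value of `f'` is attained at no more than two points of `(0,1)`;
(ii) consequently the maximum of `f(k₀₀)+f(k₀₁)+f(k₁₀)+f(k₁₁)` over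
nonnegative `kᵢⱼ` summing to `1` is attained at `kᵢⱼ = 1/4`. -/
theorem fCap_deriv_two_points_and_max :
    (∀ t : ℝ, ∀ x y z : ℝ,
      x ∈ Set.Ioo (0:ℝ) 1 → y ∈ Set.Ioo (0:ℝ) 1 → z ∈ Set.Ioo (0:ℝ) 1 →
      deriv fCap x = t → deriv fCap y = t → deriv fCap z = t →
      x = y ∨ y = z ∨ x = z) ∧
    IsGreatest
      {s : ℝ | ∃ k : Fin 4 → ℝ, (∀ i, 0 ≤ k i) ∧ (∑ i, k i) = 1 ∧
        s = ∑ i, fCap (k i)}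
      (4 * fCap (1 / 4)) := by
  constructor
  · intro t x y z hx hy hz hdx hdy hdz
    have gx : gCap x = t := by rw [← (hasDerivAt_fCap x (ne_of_gt hx.1)).deriv]; exact hdx
    have gy : gCap y = t := by rw [← (hasDerivAt_fCap y (ne_of_gt hy.1)).deriv]; exact hdy
    have gz : gCap z = t := by rw [← (hasDerivAt_fCap z (ne_of_gt hz.1)).deriv]; exact hdz
    have memA : ∀ w : ℝ, w ∈ Set.Ioo (0:ℝ) 1 → w ≤ x0 → w ∈ Set.Ioc (0:ℝ) x0 :=
      fun w hw h => ⟨hw.1, h⟩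
    have memB : ∀ w : ℝ, w ∈ Set.Ioo (0:ℝ) 1 → x0 ≤ w → w ∈ Set.Ico x0 1 :=
      fun w hw h => ⟨h, hw.2⟩
    have injA := gCap_mono.injOn
    have injB := gCap_anti.injOn
    rcases le_total x x0 with h1 | h1 <;> rcases le_total y x0 with h2 | h2 <;>
      rcases le_total z x0 with h3 | h3
    · exact Or.inl (injA (memA x hx h1) (memA y hy h2) (gx.trans gy.symm))
    · exact Or.inl (injA (memA x hx h1) (memA y hy h2) (gx.trans gy.symm))
    · exact Or.inr (Or.inr (injA (memA x hx h1) (memA z hz h3) (gx.trans gz.symm)))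
    · exact Or.inr (Or.inl (injB (memB y hy h2) (memB z hz h3) (gy.trans gz.symm)))
    · exact Or.inr (Or.inl (injA (memA y hy h2) (memA z hz h3) (gy.trans gz.symm)))
    · exact Or.inr (Or.inr (injB (memB x hx h1) (memB z hz h3) (gx.trans gz.symm)))
    · exact Or.inl (injB (memB x hx h1) (memB y hy h2) (gx.trans gy.symm))
    · exact Or.inl (injB (memB x hx h1) (memB y hy h2) (gx.trans gy.symm))
  · constructor
    · refine ⟨fun _ => 1/4, fun i => by norm_num, ?_, ?_⟩
      · norm_num [Finset.sum_const]
      · rw [Finset.sum_const]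
        norm_num
    · rintro s ⟨k, hk0, hk1, rfl⟩
      rw [Fin.sum_univ_four] at hk1 ⊢
      have b0 := key_bound (k 0) (hk0 0)
      have b1 := key_bound (k 1) (hk0 1)
      have b2 := key_bound (k 2) (hk0 2)
      have b3 := key_bound (k 3) (hk0 3)
      have hsq : (1:ℝ)/4 ≤ k 0 ^ 2 + k 1 ^ 2 + k 2 ^ 2 + k 3 ^ 2 := by
        nlinarith [sq_nonneg (k 0 - k 1), sq_nonneg (k 0 - k 2), sq_nonneg (k 0 - k 3),
          sq_nonneg (k 1 - k 2), sq_nonneg (k 1 - k 3), sq_nonneg (k 2 - k 3)]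
      rw [fCap_quarter]
      nlinarith [mul_nonneg (sub_nonneg.2 log163_lt_two.le)
        (sub_nonneg.2 hsq), log163_lt_two]
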